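/- If Cay(ℤ, S) with S a finite nonempty inverse-closed set of nonzero integers admits a decomposition into |S⁺| edge-disjoint two-way-infinite Hamilton paths, then gcd(S) = 1 and the sum of the elements of S⁺ is congruent to |S⁺| modulo 2. -/

import Mathlib

set_option linter.unusedSectionVars false

section Enum

variable (N : ℤ → ℤ × ℤ)

private def oth (v u : ℤ) : ℤ := if u = (N v).1 then (N v).2 else (N v).1

private def dstep (p : ℤ × ℤ) : ℤ × ℤ := (p.2, oth N p.2 p.1)

private def seq (p : ℤ × ℤ) (m : ℕ) : ℤ × ℤ := (dstep N)^[m] p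

private def enum (z : ℤ) : ℤ :=
  if 0 ≤ z then (seq N ((N 0).2, 0) z.toNat).2 else (seq N ((N 0).1, 0) (-z).toNat).2

private lemma seq_fst (p : ℤ × ℤ) (m : ℕ) : (seq N p (m+1)).1 = (seq N p m).2 := by
  have : seq N p (m+1) = dstep N (seq N p m) := Function.iterate_succ_apply' _ _ _
  rw [this]; rfl

private lemma seq_snd (p : ℤ × ℤ) (m : ℕ) :
    (seq N p (m+1)).2 = oth N (seq N p m).2 (seq N p m).1 := by
  have : seq N p (m+1) = dstep N (seq N p m) := Function.iterate_succ_apply' _ _ _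
  rw [this]; rfl

private lemma enum_nat (m : ℕ) : enum N (m : ℤ) = (seq N ((N 0).2, 0) m).2 := by
  unfold enum
  rw [if_pos (by positivity), Int.toNat_natCast]

private lemma enum_neg (m : ℕ) : enum N (-(m : ℤ)) = (seq N ((N 0).1, 0) m).2 := by
  unfold enum
  rcases Nat.eq_zero_or_pos m with rfl | hm
  · simp only [Nat.cast_zero, neg_zero, le_refl, if_pos, Int.toNat_zero]
    rfl
  · rw [if_neg (by omega), neg_neg, Int.toNat_natCast]

private lemma enum_zero : enum N 0 = 0 := by
  have := enum_nat N 0; simpa [seq] using this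

variable (H : SimpleGraph ℤ)
variable (hN1 : ∀ v : ℤ, (N v).1 ≠ (N v).2)
variable (hN2 : ∀ v : ℤ, H.neighborSet v = {(N v).1, (N v).2})

include hN1 hN2

private lemma oth_mem (v u : ℤ) : oth N v u ∈ H.neighborSet v := by
  rw [hN2]
  unfold oth
  split
  · exact Set.mem_insert_of_mem _ rfl
  · exact Set.mem_insert _ _

private lemma oth_ne (v u : ℤ) : oth N v u ≠ u := by
  unfold oth
  split
  · rename_i he; rw [he]; exact (hN1 v).symm
  · rename_i he; exact fun h => he h.symm

private lemma oth_uniq (v u w : ℤ) (hu : u ∈ H.neighborSet v) (hw : w ∈ H.neighborSet v)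
    (hne : w ≠ u) : w = oth N v u := by
  rw [hN2] at hu hw
  simp only [Set.mem_insert_iff, Set.mem_singleton_iff] at hu hw
  unfold oth
  rcases hu with hu | hu <;> rcases hw with hw | hw
  · exact absurd (hw.trans hu.symm) hne
  · rw [if_pos hu]; exact hw
  · rw [if_neg (by rw [hu]; exact fun he => hN1 v he.symm)]; exact hw
  · exact absurd (hw.trans hu.symm) hne

private lemma oth_invol (v u : ℤ) (hu : u ∈ H.neighborSet v) : oth N v (oth N v u) = u := by
  refine (oth_uniq N H hN1 hN2 v (oth N v u) u (oth_mem N H hN1 hN2 v u) hu ?_).symm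
  exact fun he => oth_ne N H hN1 hN2 v u he.symm

private lemma nbr_pair (v u : ℤ) (hu : u ∈ H.neighborSet v) :
    H.neighborSet v = {u, oth N v u} := by
  have h1 := oth_mem N H hN1 hN2 v u
  rw [hN2] at hu h1 ⊢
  simp only [Set.mem_insert_iff, Set.mem_singleton_iff] at hu h1
  have hne := oth_ne N H hN1 hN2 v u
  rcases hu with hu | hu <;> rcases h1 with h1 | h1
  · exact absurd (h1.trans hu.symm) hne
  · rw [← hu, ← h1]
  · rw [← hu, ← h1]; exact Set.pair_comm _ _
  · exact absurd (h1.trans hu.symm) hne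

private lemma seq_adj (p : ℤ × ℤ) (hp : H.Adj p.1 p.2) (m : ℕ) :
    H.Adj (seq N p m).1 (seq N p m).2 := by
  induction m with
  | zero => exact hp
  | succ m ih =>
    have : seq N p (m+1) = dstep N (seq N p m) := Function.iterate_succ_apply' _ _ _
    rw [this]
    exact oth_mem N H hN1 hN2 _ _

private lemma adj_b : H.Adj ((N 0).2 , (0:ℤ)).1 ((N 0).2, (0:ℤ)).2 := by
  have : (N 0).2 ∈ H.neighborSet 0 := by rw [hN2]; exact Set.mem_insert_of_mem _ rfl
  exact this.symm

private lemma adj_a : H.Adj ((N 0).1 , (0:ℤ)).1 ((N 0).1, (0:ℤ)).2 := by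
  have : (N 0).1 ∈ H.neighborSet 0 := by rw [hN2]; exact Set.mem_insert _ _
  exact this.symm

private lemma enum_adj : ∀ z : ℤ, H.Adj (enum N z) (enum N (z + 1)) := by
  intro z
  cases z with
  | ofNat m =>
    show H.Adj (enum N (m : ℤ)) (enum N ((m : ℤ) + 1))
    have h1 : ((m : ℤ) + 1) = ((m + 1 : ℕ) : ℤ) := by push_cast; ring
    rw [h1, enum_nat, enum_nat]
    have := seq_adj N H hN1 hN2 _ (adj_b N H hN1 hN2) (m + 1)
    rwa [seq_fst N _ m] at this
  | negSucc m =>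
    have h2 : (Int.negSucc m) + 1 = -((m : ℕ) : ℤ) := by
      rw [Int.negSucc_eq]; push_cast; ring
    have h1 : (Int.negSucc m) = -((m + 1 : ℕ) : ℤ) := by
      rw [Int.negSucc_eq]; push_cast; ring
    rw [h2, h1, enum_neg, enum_neg]
    have := seq_adj N H hN1 hN2 _ (adj_a N H hN1 hN2) (m + 1)
    rw [seq_fst N _ m] at this
    exact this.symm

private lemma enum_rec : ∀ z : ℤ, enum N (z + 1) = oth N (enum N z) (enum N (z - 1)) := by
  intro z
  rcases lt_trichotomy z 0 with hz | rfl | hz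
  · obtain ⟨m, rfl⟩ : ∃ m : ℕ, z = -((m + 1 : ℕ) : ℤ) := by
      refine ⟨(-z - 1).toNat, ?_⟩; omega
    have h1 : -((m + 1 : ℕ) : ℤ) + 1 = -((m : ℕ) : ℤ) := by push_cast; ring
    have h2 : -((m + 1 : ℕ) : ℤ) - 1 = -((m + 2 : ℕ) : ℤ) := by push_cast; ring
    rw [h1, h2, enum_neg, enum_neg, enum_neg]
    have hrec : (seq N ((N 0).1, 0) (m+2)).2
        = oth N (seq N ((N 0).1, 0) (m+1)).2 (seq N ((N 0).1, 0) m).2 := by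
      rw [seq_snd, seq_fst]
    rw [hrec]
    refine (oth_invol N H hN1 hN2 _ _ ?_).symm
    have := seq_adj N H hN1 hN2 _ (adj_a N H hN1 hN2) (m + 1)
    rw [seq_fst N _ m] at this
    exact this.symm
  · have e1 : enum N (1:ℤ) = oth N 0 (N 0).2 := by
      have h := enum_nat N 1
      rw [seq_snd] at h
      simpa [seq] using h
    have em1 : enum N (-1:ℤ) = oth N 0 (N 0).1 := by
      have h := enum_neg N 1
      rw [seq_snd] at h
      simpa [seq] using h
    have hoa : oth N 0 (N 0).1 = (N 0).2 := by unfold oth; rw [if_pos rfl]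
    have hob : oth N 0 (N 0).2 = (N 0).1 := by
      unfold oth; rw [if_neg (fun he => hN1 0 he.symm)]
    show enum N (0 + 1) = oth N (enum N 0) (enum N (0 - 1))
    rw [show (0:ℤ)+1 = 1 by ring, show (0:ℤ)-1 = -1 by ring, enum_zero, e1, em1, hoa, hob]
  · obtain ⟨m, rfl⟩ : ∃ m : ℕ, z = ((m + 1 : ℕ) : ℤ) := by
      refine ⟨(z - 1).toNat, ?_⟩; omega
    have h1 : ((m + 1 : ℕ) : ℤ) + 1 = ((m + 2 : ℕ) : ℤ) := by push_cast; ring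
    have h2 : ((m + 1 : ℕ) : ℤ) - 1 = ((m : ℕ) : ℤ) := by push_cast; ring
    rw [h1, h2, enum_nat, enum_nat, enum_nat, seq_snd, seq_fst]

private lemma enum_rec' : ∀ z : ℤ, enum N (z - 1) = oth N (enum N z) (enum N (z + 1)) := by
  intro z
  have h1 := enum_rec N H hN1 hN2 z
  have hmem : enum N (z - 1) ∈ H.neighborSet (enum N z) := by
    have := enum_adj N H hN1 hN2 (z - 1)
    rw [show z - 1 + 1 = z by ring] at this
    exact this.symm
  rw [h1, oth_invol N H hN1 hN2 _ _ hmem]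

private lemma enum_ne : ∀ z : ℤ, enum N (z + 1) ≠ enum N (z - 1) := by
  intro z
  rw [enum_rec N H hN1 hN2 z]
  exact oth_ne N H hN1 hN2 _ _

private lemma enum_nbr : ∀ z : ℤ, H.neighborSet (enum N z) = {enum N (z - 1), enum N (z + 1)} := by
  intro z
  have hmem : enum N (z - 1) ∈ H.neighborSet (enum N z) := by
    have := enum_adj N H hN1 hN2 (z - 1)
    rw [show z - 1 + 1 = z by ring] at this
    exact this.symm
  rw [nbr_pair N H hN1 hN2 _ _ hmem, ← enum_rec N H hN1 hN2 z]

end Enum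

section Enum3

variable (N : ℤ → ℤ × ℤ)

private lemma seq_ext (φ ψ : ℤ → ℤ)
    (hφ1 : ∀ z, φ (z+1) = oth N (φ z) (φ (z-1)))
    (hφ2 : ∀ z, φ (z-1) = oth N (φ z) (φ (z+1)))
    (hψ1 : ∀ z, ψ (z+1) = oth N (ψ z) (ψ (z-1)))
    (hψ2 : ∀ z, ψ (z-1) = oth N (ψ z) (ψ (z+1)))
    (h0 : φ 0 = ψ 0) (h1 : φ 1 = ψ 1) : ∀ z, φ z = ψ z := by
  have fwd : ∀ z, 0 ≤ z → (φ z = ψ z ∧ φ (z+1) = ψ (z+1)) := by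
    intro z hz
    refine Int.le_induction (motive := fun z _ => φ z = ψ z ∧ φ (z+1) = ψ (z+1)) ⟨h0, by simpa using h1⟩ ?_ z hz
    rintro n hn ⟨e1, e2⟩
    refine ⟨e2, ?_⟩
    have a1 := hφ1 (n+1)
    have a2 := hψ1 (n+1)
    rw [show n+1-1 = n by ring] at a1 a2
    rw [a1, a2, e1, e2]
  have bwd : ∀ z, z ≤ 0 → (φ z = ψ z ∧ φ (z+1) = ψ (z+1)) := by
    intro z hz
    refine Int.le_induction_down (motive := fun z _ => φ z = ψ z ∧ φ (z+1) = ψ (z+1)) ⟨h0, by simpa using h1⟩ ?_ z hz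
    rintro n hn ⟨e1, e2⟩
    refine ⟨?_, by rw [show n-1+1 = n by ring]; exact e1⟩
    have a1 := hφ2 n
    have a2 := hψ2 n
    rw [a1, a2, e1, e2]
  intro z
  rcases le_or_gt 0 z with hz | hz
  · exact (fwd z hz).1
  · exact (bwd z hz.le).1

variable (H : SimpleGraph ℤ)
variable (hN1 : ∀ v : ℤ, (N v).1 ≠ (N v).2)
variable (hN2 : ∀ v : ℤ, H.neighborSet v = {(N v).1, (N v).2})

include hN1 hN2

private lemma enum_shift_ext (i j : ℤ) (h0 : enum N i = enum N j) (h1 : enum N (i+1) = enum N (j+1)) :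
    ∀ t : ℤ, enum N (i + t) = enum N (j + t) := by
  have := seq_ext N (fun t => enum N (i + t)) (fun t => enum N (j + t)) ?_ ?_ ?_ ?_ (by simpa using h0) (by simpa using h1)
  · exact this
  all_goals
    intro z
  · rw [show i + (z+1) = (i+z) + 1 by ring, show i + (z-1) = (i+z) - 1 by ring]
    exact enum_rec N H hN1 hN2 (i+z)
  · rw [show i + (z-1) = (i+z) - 1 by ring, show i + (z+1) = (i+z) + 1 by ring]
    exact enum_rec' N H hN1 hN2 (i+z)
  · rw [show j + (z+1) = (j+z) + 1 by ring, show j + (z-1) = (j+z) - 1 by ring]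
    exact enum_rec N H hN1 hN2 (j+z)
  · rw [show j + (z-1) = (j+z) - 1 by ring, show j + (z+1) = (j+z) + 1 by ring]
    exact enum_rec' N H hN1 hN2 (j+z)

private lemma enum_refl_ext (i j : ℤ) (h0 : enum N i = enum N j) (h1 : enum N (i+1) = enum N (j-1)) :
    ∀ t : ℤ, enum N (i + t) = enum N (j - t) := by
  have := seq_ext N (fun t => enum N (i + t)) (fun t => enum N (j - t)) ?_ ?_ ?_ ?_ (by simpa using h0) (by simpa using h1)
  · exact this
  all_goals
    intro z
  · rw [show i + (z+1) = (i+z) + 1 by ring, show i + (z-1) = (i+z) - 1 by ring]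
    exact enum_rec N H hN1 hN2 (i+z)
  · rw [show i + (z-1) = (i+z) - 1 by ring, show i + (z+1) = (i+z) + 1 by ring]
    exact enum_rec' N H hN1 hN2 (i+z)
  · rw [show j - (z+1) = (j-z) - 1 by ring, show j - (z-1) = (j-z) + 1 by ring]
    exact enum_rec' N H hN1 hN2 (j-z)
  · rw [show j - (z-1) = (j-z) + 1 by ring, show j - (z+1) = (j-z) - 1 by ring]
    exact enum_rec N H hN1 hN2 (j-z)

end Enum3

section Enum4

variable (N : ℤ → ℤ × ℤ)
variable (H : SimpleGraph ℤ)
variable (hN1 : ∀ v : ℤ, (N v).1 ≠ (N v).2)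
variable (hN2 : ∀ v : ℤ, H.neighborSet v = {(N v).1, (N v).2})

include hN1 hN2

private lemma enum_adj_cases (z : ℤ) (u : ℤ) (hu : H.Adj (enum N z) u) :
    u = enum N (z - 1) ∨ u = enum N (z + 1) := by
  have : u ∈ H.neighborSet (enum N z) := hu
  rw [enum_nbr N H hN1 hN2 z] at this
  simpa using this

private lemma enum_surj (hconn : H.Connected) : Function.Surjective (enum N) := by
  have hstep : ∀ u v : ℤ, H.Adj u v → u ∈ Set.range (enum N) → v ∈ Set.range (enum N) := by
    rintro u v huv ⟨z, rfl⟩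
    rcases enum_adj_cases N H hN1 hN2 z v huv with h | h
    · exact ⟨z - 1, h.symm⟩
    · exact ⟨z + 1, h.symm⟩
  have hwalk : ∀ u v : ℤ, H.Walk u v → u ∈ Set.range (enum N) → v ∈ Set.range (enum N) := by
    intro u v w
    induction w with
    | nil => exact id
    | cons h p ih => exact fun hu => ih (hstep _ _ h hu)
  intro v
  obtain ⟨w⟩ := hconn.preconnected 0 v
  exact hwalk 0 v w ⟨0, enum_zero N⟩

private lemma enum_inj (hconn : H.Connected) : Function.Injective (enum N) := by
  have key : ∀ i j : ℤ, i < j → enum N i ≠ enum N j := by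
    intro i j hij heq
    have hnbr : ({enum N (i-1), enum N (i+1)} : Set ℤ) = {enum N (j-1), enum N (j+1)} := by
      rw [← enum_nbr N H hN1 hN2 i, ← enum_nbr N H hN1 hN2 j, heq]
    have hmem : enum N (i+1) ∈ ({enum N (j-1), enum N (j+1)} : Set ℤ) := by
      rw [← hnbr]; exact Set.mem_insert_of_mem _ rfl
    simp only [Set.mem_insert_iff, Set.mem_singleton_iff] at hmem
    rcases hmem with hcB | hcA
    · -- reflection case : enum (i+t) = enum (j-t)
      have hrefl := enum_refl_ext N H hN1 hN2 i j heq hcB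
      rcases Int.even_or_odd (j - i) with ⟨c, hc⟩ | ⟨c, hc⟩
      · -- j - i = 2c, c ≥ 1 ; t = c+1 : enum (i+c+1) = enum (j-c-1) = enum (i+c-1)
        have h1 := hrefl (c+1)
        rw [show j - (c+1) = (i+c) - 1 by omega, show i + (c+1) = (i+c)+1 by ring] at h1
        exact enum_ne N H hN1 hN2 (i+c) h1
      · -- j - i = 2c+1 : t = c : enum (i+c) = enum (j-c) = enum (i+c+1)
        have h1 := hrefl c
        rw [show j - c = (i+c) + 1 by omega] at h1
        exact (enum_adj N H hN1 hN2 (i+c)).ne h1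
    · -- shift case : periodicity
      have hshift := enum_shift_ext N H hN1 hN2 i j heq hcA
      set T := j - i with hT
      have hTpos : 0 < T := by omega
      have hper : ∀ z : ℤ, enum N (z + T) = enum N z := by
        intro z
        have := hshift (z - i)
        rw [show i + (z - i) = z by ring, show j + (z - i) = z + T by omega] at this
        exact this.symm
      have hperk : ∀ k : ℤ, ∀ z : ℤ, enum N (z + k * T) = enum N z := by
        intro k
        induction k using Int.induction_on with
        | zero => intro z; rw [zero_mul, add_zero]
        | succ k ih =>
          intro z
          rw [show z + (k+1) * T = (z + T) + k * T by ring, ih (z + T), hper z]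
        | pred k ih =>
          intro z
          have := ih (z - T)
          rw [show z - T + (-k) * T = z + (-(k:ℤ)-1) * T by ring] at this
          rw [this, ← hper (z - T), show z - T + T = z by ring]
      have hmod : ∀ z : ℤ, enum N z = enum N (z % T) := by
        intro z
        have := hperk (z / T) (z % T)
        rw [show z % T + z / T * T = z by rw [Int.emod_add_ediv_mul z T]] at this
        exact this
      have hrange : Set.range (enum N) ⊆ enum N '' (Set.Ico 0 T) := by
        rintro v ⟨z, rfl⟩
        exact ⟨z % T, ⟨Int.emod_nonneg z (by omega), Int.emod_lt_of_pos z hTpos⟩, (hmod z).symm⟩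
      have hfin : (Set.range (enum N)).Finite :=
        ((Set.finite_Ico 0 T).image _).subset hrange
      have : (Set.univ : Set ℤ).Finite := by
        rwa [(enum_surj N H hN1 hN2 hconn).range_eq] at hfin
      exact Set.infinite_univ this
  intro i j hij
  by_contra hne
  rcases lt_trichotomy i j with h | h | h
  · exact key i j h hij
  · exact hne h
  · exact key j i h hij.symm

end Enum4

lemma exists_enum (H : SimpleGraph ℤ) (hconn : H.Connected)
    (hdeg : ∀ v : ℤ, (H.neighborSet v).ncard = 2) :
    ∃ f : ℤ → ℤ, Function.Injective f ∧ Function.Surjective f ∧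
      (∀ m : ℤ, H.Adj (f m) (f (m+1))) ∧
      (∀ m u, H.Adj (f m) u → u = f (m-1) ∨ u = f (m+1)) := by
  classical
  have hex : ∀ v : ℤ, ∃ p : ℤ × ℤ, p.1 ≠ p.2 ∧ H.neighborSet v = {p.1, p.2} := by
    intro v
    obtain ⟨a, b, hab, hs⟩ := Set.ncard_eq_two.mp (hdeg v)
    exact ⟨(a, b), hab, hs⟩
  choose N hN1 hN2 using hex
  exact ⟨enum N, enum_inj N H hN1 hN2 hconn, enum_surj N H hN1 hN2 hconn,
    enum_adj N H hN1 hN2, enum_adj_cases N H hN1 hN2⟩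

private lemma parity_changes (x : ℤ → Bool) (a b : ℤ) (hab : a ≤ b) :
    ((Finset.Ico a b).filter (fun j => ¬ x j = x (j+1))).card % 2
      = (if x a = x b then 0 else 1) := by
  classical
  refine Int.le_induction (motive := fun b _ => ((Finset.Ico a b).filter (fun j => ¬ x j = x (j+1))).card % 2
      = (if x a = x b then 0 else 1)) ?_ ?_ b hab
  · simp
  · intro m hm ih
    have hIcc : Finset.Ico a (m+1) = Finset.Icc a m := by
      ext j; simp only [Finset.mem_Ico, Finset.mem_Icc]; omega
    rw [hIcc, ← Finset.Ico_insert_right hm, Finset.filter_insert]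
    by_cases hch : x m = x (m+1)
    · rw [if_neg (by simpa using hch), ih, hch]
    · rw [if_pos hch, Finset.card_insert_of_notMem (fun hmem => by
        have := Finset.mem_of_mem_filter _ hmem
        simp at this)]
      cases hxa : x a <;> cases hxm : x m <;> cases hxm1 : x (m+1) <;>
        simp_all <;> omega

lemma cross_odd (H : SimpleGraph ℤ) (M : ℤ)
    (hbd : ∀ u v : ℤ, H.Adj u v → |u - v| ≤ M)
    (hconn : H.Connected) (hdeg : ∀ v : ℤ, (H.neighborSet v).ncard = 2) (n : ℤ) :
    Odd {p : ℤ × ℤ | H.Adj p.1 p.2 ∧ p.1 ≤ n ∧ n < p.2}.ncard := by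
  classical
  obtain ⟨f, hinj, hsurj, hadj, hcases⟩ := exists_enum H hconn hdeg
  set x : ℤ → Bool := fun j => decide (f j ≤ n) with hx
  have hxt : ∀ j, x j = true ↔ f j ≤ n := by intro j; simp [hx]
  have hxf : ∀ j, x j = false ↔ n < f j := by intro j; simp [hx]
  set Chg : Set ℤ := {j | ¬ x j = x (j+1)} with hChg
  have hChgsub : Chg ⊆ f ⁻¹' (Set.Icc (n - M) (n + M)) := by
    intro j hj
    have hb := hbd _ _ (hadj j)
    rw [abs_le] at hb
    simp only [hChg, Set.mem_setOf_eq] at hj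
    simp only [Set.mem_preimage, Set.mem_Icc]
    by_cases h1 : f j ≤ n <;> by_cases h2 : f (j+1) ≤ n
    · exact absurd (by rw [(hxt j).2 h1, (hxt (j+1)).2 h2]) hj
    · omega
    · omega
    · exact absurd (by rw [(hxf j).2 (by omega), (hxf (j+1)).2 (by omega)]) hj
  have hfin : Chg.Finite := ((Set.finite_Icc _ _).preimage hinj.injOn).subset hChgsub
  obtain ⟨lo, hlo⟩ := hfin.bddBelow
  obtain ⟨hi, hhi⟩ := hfin.bddAbove
  set a : ℤ := lo with ha
  set b : ℤ := max (hi + 1) lo with hb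
  have hab : a ≤ b := le_max_right _ _
  have hnotChg_up : ∀ j, b ≤ j → j ∉ Chg := by
    intro j hj hmem
    have := hhi hmem
    have : hi + 1 ≤ b := le_max_left _ _
    omega
  have hnotChg_dn : ∀ j, j < a → j ∉ Chg := by
    intro j hj hmem
    have := hlo hmem
    omega
  have hconst_up : ∀ j, b ≤ j → x j = x b := by
    intro j hj
    refine Int.le_induction (motive := fun j _ => x j = x b) rfl ?_ j hj
    intro m hm ih
    have := hnotChg_up m hm
    simp only [hChg, Set.mem_setOf_eq, not_not] at this
    rw [← this, ih]
  have hconst_dn : ∀ j, j ≤ a → x j = x a := by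
    intro j hj
    refine Int.le_induction_down (motive := fun j _ => x j = x a) rfl ?_ j hj
    intro m hm ih
    have := hnotChg_dn (m - 1) (by omega)
    simp only [hChg, Set.mem_setOf_eq, not_not] at this
    rw [show m - 1 + 1 = m by ring] at this
    rw [this, ih]
  have hne_ab : ¬ x a = x b := by
    intro heq
    cases hv : x b
    · -- x is false on both tails : {j | f j ≤ n} ⊆ bounded
      have hsub : f ⁻¹' (Set.Iic n) ⊆ Set.Ioo (a - 1) b := by
        intro j hj
        have hxj : x j = true := (hxt j).2 hj
        constructor
        · by_contra hc
          have := hconst_dn j (by omega)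
          rw [hxj, heq, hv] at this
          exact Bool.noConfusion this
        · by_contra hc
          have := hconst_up j (by omega)
          rw [hxj, hv] at this
          exact Bool.noConfusion this
      have hinf : (f ⁻¹' (Set.Iic n)).Infinite := by
        refine Set.Infinite.preimage ?_ (by rw [hsurj.range_eq]; exact Set.subset_univ _)
        exact Set.Iic_infinite n
      exact hinf ((Set.finite_Ioo _ _).subset hsub)
    · have hsub : f ⁻¹' (Set.Ioi n) ⊆ Set.Ioo (a - 1) b := by
        intro j hj
        have hxj : x j = false := (hxf j).2 hj
        constructor
        · by_contra hc
          have := hconst_dn j (by omega)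
          rw [hxj, heq, hv] at this
          exact Bool.noConfusion this
        · by_contra hc
          have := hconst_up j (by omega)
          rw [hxj, hv] at this
          exact Bool.noConfusion this
      have hinf : (f ⁻¹' (Set.Ioi n)).Infinite := by
        refine Set.Infinite.preimage ?_ (by rw [hsurj.range_eq]; exact Set.subset_univ _)
        exact Set.Ioi_infinite n
      exact hinf ((Set.finite_Ioo _ _).subset hsub)
  have hChg_eq : Chg = ↑((Finset.Ico a b).filter (fun j => ¬ x j = x (j+1))) := by
    ext j
    simp only [Finset.coe_filter, Set.mem_setOf_eq, Finset.mem_Ico, hChg]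
    constructor
    · intro hj
      refine ⟨⟨hlo hj, ?_⟩, hj⟩
      have := hhi hj
      have : hi + 1 ≤ b := le_max_left _ _
      omega
    · exact fun hj => hj.2
  have hcard : Chg.ncard % 2 = 1 := by
    rw [hChg_eq, Set.ncard_coe_finset, parity_changes x a b hab, if_neg hne_ab]
  set θ : ℤ → ℤ × ℤ := fun j => if x j = true then (f j, f (j+1)) else (f (j+1), f j) with hθ
  have himg : θ '' Chg = {p : ℤ × ℤ | H.Adj p.1 p.2 ∧ p.1 ≤ n ∧ n < p.2} := by
    ext p
    constructor
    · rintro ⟨j, hj, rfl⟩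
      simp only [hChg, Set.mem_setOf_eq] at hj
      cases hxj : x j
      · have hxj1 : x (j+1) = true := by
          cases h' : x (j+1)
          · rw [hxj, h'] at hj; exact absurd rfl hj
          · rfl
        simp only [hθ, hxj, Bool.false_eq_true, if_neg, Set.mem_setOf_eq]
        refine ⟨(hadj j).symm, (hxt (j+1)).1 hxj1, (hxf j).1 hxj⟩
      · have hxj1 : x (j+1) = false := by
          cases h' : x (j+1)
          · rfl
          · rw [hxj, h'] at hj; exact absurd rfl hj
        simp only [hθ, hxj, if_pos, Set.mem_setOf_eq]
        exact ⟨hadj j, (hxt j).1 hxj, (hxf (j+1)).1 hxj1⟩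
    · rintro ⟨hp, hp1, hp2⟩
      obtain ⟨u, v⟩ := p
      simp only at hp hp1 hp2
      obtain ⟨j, rfl⟩ := hsurj u
      rcases hcases j v hp with rfl | rfl
      · refine ⟨j - 1, ?_, ?_⟩
        · simp only [hChg, Set.mem_setOf_eq]
          rw [show j - 1 + 1 = j by ring, (hxf (j-1)).2 hp2, (hxt j).2 hp1]
          simp
        · simp only [hθ, (hxf (j-1)).2 hp2]
          rw [if_neg (by simp), show j - 1 + 1 = j by ring]
      · refine ⟨j, ?_, ?_⟩
        · simp only [hChg, Set.mem_setOf_eq]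
          rw [(hxt j).2 hp1, (hxf (j+1)).2 hp2]
          simp
        · simp only [hθ, (hxt j).2 hp1, if_pos]
  have hinjOn : Set.InjOn θ Chg := by
    intro j hj j' hj' heq
    simp only [hθ] at heq
    by_cases hxj : x j = true <;> by_cases hxj' : x j' = true <;>
      simp only [hxj, hxj', if_pos, if_neg, Bool.not_eq_true, Prod.mk.injEq] at heq
    · exact hinj heq.1
    · have e1 := hinj heq.1
      have e2 := hinj heq.2
      omega
    · have e1 := hinj heq.1
      have e2 := hinj heq.2
      omega
    · exact hinj heq.2
  rw [← himg, Set.ncard_image_of_injOn hinjOn]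
  exact Nat.odd_iff.2 hcard

/-- Infinite circulant graph on ℤ: `u ~ v` iff `u - v ∈ S` or `v - u ∈ S`. -/
def cay (S : Set ℤ) : SimpleGraph ℤ where
  Adj u v := u ≠ v ∧ (u - v ∈ S ∨ v - u ∈ S)
  symm := by
    constructor
    intro u v h
    exact ⟨h.1.symm, h.2.symm⟩
  loopless := by
    constructor
    intro v h
    exact h.1 rfl

/-- `H` is a two-way-infinite Hamilton path of `G`: a connected spanning subgraph
in which every vertex has degree 2. -/
def IsHamPath (G H : SimpleGraph ℤ) : Prop :=
  H ≤ G ∧ H.Connected ∧ ∀ v : ℤ, (H.neighborSet v).ncard = 2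

/-- `G` decomposes into `k` edge-disjoint two-way-infinite Hamilton paths. -/
def HamDecomp (G : SimpleGraph ℤ) (k : ℕ) : Prop :=
  ∃ D : Fin k → SimpleGraph ℤ,
    (∀ i, IsHamPath G (D i)) ∧
    (∀ i j, i ≠ j → Disjoint (D i).edgeSet (D j).edgeSet) ∧
    ∀ e ∈ G.edgeSet, ∃ i, e ∈ (D i).edgeSet

theorem stmt4 (S : Finset ℤ) (hne : S.Nonempty) (h0 : (0:ℤ) ∉ S)
    (hinv : ∀ s ∈ S, -s ∈ S)
    (h : HamDecomp (cay ↑S) (S.filter fun a => 0 < a).card) :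
    (∀ d : ℕ, (∀ s ∈ S, (d : ℤ) ∣ s) → d = 1) ∧
    (S.filter fun a => 0 < a).sum id % 2 = ((S.filter fun a => 0 < a).card : ℤ) % 2 := by
  classical
  set Sp := S.filter (fun a => 0 < a) with hSp
  obtain ⟨D, hD, hdisj, hcover⟩ := h
  have hSpne : Sp.Nonempty := by
    obtain ⟨s, hs⟩ := hne
    rcases lt_trichotomy s 0 with h1 | h1 | h1
    · exact ⟨-s, Finset.mem_filter.2 ⟨hinv s hs, by omega⟩⟩
    · exact absurd (h1 ▸ hs) h0
    · exact ⟨s, Finset.mem_filter.2 ⟨hs, h1⟩⟩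
  have hk : 0 < Sp.card := Finset.card_pos.2 hSpne
  constructor
  · -- gcd part
    intro dd hdd
    set i0 : Fin Sp.card := ⟨0, hk⟩
    obtain ⟨hle, hconn, _⟩ := hD i0
    obtain ⟨w⟩ := hconn.preconnected 0 1
    have hdvd : ∀ (u v : ℤ) (p : (D i0).Walk u v), (dd:ℤ) ∣ (v - u) := by
      intro u v p
      induction p with
      | nil => simp
      | @cons u u' v hadj p ih =>
        have h1 : (cay ↑S).Adj u u' := hle hadj
        have h2 : (dd:ℤ) ∣ (u' - u) := by
          rcases h1.2 with hm | hm
          · rw [show u' - u = -(u - u') by ring]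
            exact dvd_neg.mpr (hdd _ hm)
          · exact hdd _ hm
        have : v - u = (v - u') + (u' - u) := by ring
        rw [this]
        exact dvd_add ih h2
    have hdvd1 : (dd:ℤ) ∣ 1 := by simpa using hdvd 0 1 w
    have := Int.eq_one_of_dvd_one (by positivity) hdvd1
    exact_mod_cast this
  · -- parity part
    set M : ℤ := S.sup' hne (fun s => |s|) with hM
    have hMb : ∀ s ∈ S, |s| ≤ M := fun s hs => Finset.le_sup' _ hs
    have hGadj_bd : ∀ u v : ℤ, (cay ↑S).Adj u v → |u - v| ≤ M := by
      intro u v hu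
      rcases hu.2 with h1 | h1
      · exact hMb _ h1
      · rw [abs_sub_comm]; exact hMb _ h1
    set X : Fin Sp.card → Set (ℤ × ℤ) :=
      fun i => {p : ℤ × ℤ | (D i).Adj p.1 p.2 ∧ p.1 ≤ 0 ∧ 0 < p.2} with hX
    set XG : Set (ℤ × ℤ) := {p : ℤ × ℤ | (cay ↑S).Adj p.1 p.2 ∧ p.1 ≤ 0 ∧ 0 < p.2} with hXG
    have hXsub : ∀ i, X i ⊆ XG := fun i p hp => ⟨(hD i).1 hp.1, hp.2⟩
    have hXGfin : XG.Finite := by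
      refine ((Set.finite_Icc (-M) 0).prod (Set.finite_Icc 1 M)).subset ?_
      rintro ⟨u, v⟩ ⟨hadj, h1, h2⟩
      have := hGadj_bd u v hadj
      rw [abs_le] at this
      exact ⟨Set.mem_Icc.2 ⟨by omega, h1⟩, Set.mem_Icc.2 ⟨h2, by omega⟩⟩
    have hXfin : ∀ i, (X i).Finite := fun i => hXGfin.subset (hXsub i)
    have hodd : ∀ i, Odd (X i).ncard := by
      intro i
      obtain ⟨hle, hconn, hdeg⟩ := hD i
      exact cross_odd (D i) M (fun u v huv => hGadj_bd u v (hle huv)) hconn hdeg 0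
    have hXG_eq : XG = ⋃ i, X i := by
      ext p
      simp only [Set.mem_iUnion, hXG, hX, Set.mem_setOf_eq]
      constructor
      · rintro ⟨hadj, hb1, hb2⟩
        obtain ⟨i, hi⟩ := hcover s(p.1, p.2) ((SimpleGraph.mem_edgeSet _).2 hadj)
        exact ⟨i, (SimpleGraph.mem_edgeSet _).1 hi, hb1, hb2⟩
      · rintro ⟨i, hadj, hb⟩
        exact ⟨(hD i).1 hadj, hb⟩
    set t : Fin Sp.card → Finset (ℤ × ℤ) := fun i => (hXfin i).toFinset with ht
    have htdisj : ∀ i ∈ Finset.univ, ∀ j ∈ Finset.univ, i ≠ j → Disjoint (t i) (t j) := by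
      intro i _ j _ hij
      rw [Finset.disjoint_left]
      intro p hpi hpj
      have h1 : p ∈ X i := (hXfin i).mem_toFinset.1 hpi
      have h2 : p ∈ X j := (hXfin j).mem_toFinset.1 hpj
      have e1 : s(p.1, p.2) ∈ (D i).edgeSet := (SimpleGraph.mem_edgeSet _).2 h1.1
      have e2 : s(p.1, p.2) ∈ (D j).edgeSet := (SimpleGraph.mem_edgeSet _).2 h2.1
      exact Set.disjoint_left.1 (hdisj i j hij) e1 e2
    have hTG_eq : hXGfin.toFinset = Finset.univ.biUnion t := by
      ext p
      simp only [Set.Finite.mem_toFinset, Finset.mem_biUnion, Finset.mem_univ, true_and, ht,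
        Set.Finite.mem_toFinset]
      rw [hXG_eq]
      simp [Set.mem_iUnion]
    have hcardU : hXGfin.toFinset.card = ∑ i, (t i).card := by
      rw [hTG_eq, Finset.card_biUnion htdisj]
    -- count XG
    have hcount : hXGfin.toFinset.card = ∑ s ∈ Sp, s.toNat := by
      have himg : hXGfin.toFinset
          = (Sp.sigma (fun s => Finset.Ioc (-s) 0)).image (fun q => (q.2, q.2 + q.1)) := by
        ext p
        obtain ⟨u, v⟩ := p
        simp only [Set.Finite.mem_toFinset, hXG, Set.mem_setOf_eq, Finset.mem_image,
          Finset.mem_sigma, Finset.mem_Ioc, hSp, Finset.mem_filter, Sigma.exists]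
        constructor
        · rintro ⟨⟨hne', hmem⟩, hb1, hb2⟩
          refine ⟨v - u, u, ⟨⟨?_, by omega⟩, by omega, hb1⟩, by simp⟩
          rcases hmem with hm | hm
          · have := hinv _ hm
            simpa using this
          · exact hm
        · rintro ⟨s, w, ⟨⟨hsS, hs0⟩, hw1, hw2⟩, heq⟩
          obtain ⟨rfl, rfl⟩ : w = u ∧ w + s = v := by
            constructor <;> [exact congrArg Prod.fst heq; exact congrArg Prod.snd heq]
          exact ⟨⟨by omega, Or.inr (by simpa using hsS)⟩, hw2, by omega⟩
      rw [himg, Finset.card_image_of_injOn, Finset.card_sigma]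
      · refine Finset.sum_congr rfl (fun s hs => ?_)
        rw [Int.card_Ioc]
        simp
      · rintro ⟨s, w⟩ _ ⟨s', w'⟩ _ heq
        simp only [Prod.mk.injEq] at heq
        obtain ⟨h1, h2⟩ := heq
        obtain rfl : w = w' := h1
        obtain rfl : s = s' := by omega
        rfl
    -- combine
    have hmod : (∑ s ∈ Sp, s.toNat) % 2 = Sp.card % 2 := by
      rw [← hcount, hcardU, Finset.sum_nat_mod]
      have hone : ∀ i ∈ Finset.univ, (t i).card % 2 = 1 % 2 := by
        intro i _
        have : (t i).card = (X i).ncard := by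
          rw [ht]
          exact (Set.ncard_eq_toFinset_card _ (hXfin i)).symm
        rw [this]
        rw [Nat.odd_iff.1 (hodd i)]
      rw [Finset.sum_congr rfl hone, ← Finset.sum_nat_mod]
      simp [Finset.card_univ]
    have hcast : Sp.sum id = ((∑ s ∈ Sp, s.toNat : ℕ) : ℤ) := by
      rw [Nat.cast_sum]
      refine Finset.sum_congr rfl (fun s hs => ?_)
      have : 0 < s := (Finset.mem_filter.1 hs).2
      simp [Int.toNat_of_nonneg this.le]
    rw [hcast]
    omega
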